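/- Let A be a commutative unital complex Banach algebra, let M be a maximal ideal in A, let f ∈ M, and suppose that M = cl(fA). Then the quotient M/cl(M²) has dimension at most 1 as a complex vector space; moreover, for all m ∈ ℕ, cl(M^m) = cl(f^m A), and cl(M^m) = cl(M^{m+1}) if and only if f^m ∈ cl(M^{m+1}). -/
import Mathlib


open scoped ENNReal
open Metric Set

noncomputable section

/-- The topological closure of the `m`-th power of an ideal, viewed as a complex
submodule. -/
def clPow {A : Type*} [NormedCommRing A] [NormedAlgebra ℂ A]
    (I : Ideal A) (m : ℕ) : Submodule ℂ A :=
  ((I ^ m).restrictScalars ℂ).topologicalClosure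

/-- There is a nondegenerate bounded point derivation of order `m` at the complex
homomorphism `φ` on `A`. -/
def HasNBPDAlg {A : Type*} [NormedCommRing A] [NormedAlgebra ℂ A]
    (φ : A →ₐ[ℂ] ℂ) (m : ℕ) : Prop :=
  ∃ d : ℕ → (A →ₗ[ℂ] ℂ),
    d 0 = φ.toLinearMap ∧
    (∀ k, 1 ≤ k → k ≤ m → ∀ f g : A,
      d k (f * g) = ∑ j ∈ Finset.range (k + 1), d j f * d (k - j) g) ∧
    (∀ k ≤ m, Continuous (d k)) ∧
    d 1 ≠ 0

section Aux

set_option linter.unusedSectionVars false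

variable {A : Type*} [NormedCommRing A] [NormedAlgebra ℂ A] [CompleteSpace A]

lemma mem_tc_iff' {I : Ideal A} {x : A} :
    x ∈ I.topologicalClosure ↔ x ∈ closure (I : Set A) := by
  rw [← SetLike.mem_coe, Submodule.topologicalClosure_coe]

lemma cl_mul_le' (I J : Ideal A) :
    I.topologicalClosure * J.topologicalClosure ≤ (I * J).topologicalClosure := by
  rw [Ideal.mul_le]
  intro r hr s hs
  rw [mem_tc_iff'] at hr hs ⊢
  exact map_mem_closure₂ continuous_mul hr hs fun x hx y hy =>
    Ideal.mul_mem_mul hx hy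

lemma cl_pow_le' (I : Ideal A) : ∀ m : ℕ, I.topologicalClosure ^ m ≤ (I ^ m).topologicalClosure
  | 0 => by
      rw [pow_zero, pow_zero]
      exact Submodule.le_topologicalClosure (1 : Ideal A)
  | (n + 1) => by
      rw [pow_succ, pow_succ]
      calc I.topologicalClosure ^ n * I.topologicalClosure
          ≤ (I ^ n).topologicalClosure * I.topologicalClosure :=
            mul_le_mul' (cl_pow_le' I n) le_rfl
        _ ≤ (I ^ n * I).topologicalClosure := cl_mul_le' _ _

lemma clPow_coe' (I : Ideal A) (m : ℕ) :
    (clPow I m : Set A) = closure ((I ^ m : Ideal A) : Set A) := by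
  simp [clPow, Submodule.topologicalClosure_coe]

lemma key_lemma (M : Ideal A) (hM : M.IsMaximal) (f : A) (hf : f ∈ M)
    (hMf : (M : Set A) = closure ((Ideal.span {f} : Ideal A) : Set A))
    {x : A} (hx : x ∈ M) : ∃ c : ℂ, x - c • f ∈ clPow M 2 := by
  haveI := hM
  set N : Submodule ℂ A := clPow M 2 with hN
  have hNc : IsClosed (N : Set A) := Submodule.isClosed_topologicalClosure _
  have hM2N : ∀ y ∈ (M ^ 2 : Ideal A), y ∈ N := by
    intro y hy
    have : y ∈ closure ((M ^ 2 : Ideal A) : Set A) := subset_closure hy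
    rwa [← clPow_coe', ← hN, SetLike.mem_coe] at this
  -- the character with kernel M
  let ψ : A →ₐ[ℂ] ℂ := WeakDual.CharacterSpace.equivAlgHom M.toCharacterSpace
  have hkerM : M = RingHom.ker (ψ : A →+* ℂ) := by
    refine hM.eq_of_le (RingHom.ker_ne_top _) fun a ha => ?_
    show ψ a = 0
    exact M.toCharacterSpace_apply_eq_zero_of_mem ha
  have hmem : ∀ g : A, g - algebraMap ℂ A (ψ g) ∈ M := by
    intro g
    rw [hkerM]
    show ψ (g - algebraMap ℂ A (ψ g)) = 0
    rw [map_sub, AlgHom.commutes]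
    simp
  have hspan : ∀ y ∈ (Ideal.span {f} : Ideal A), ∃ c : ℂ, y - c • f ∈ (M ^ 2 : Ideal A) := by
    intro y hy
    obtain ⟨g, rfl⟩ := Ideal.mem_span_singleton'.mp hy
    refine ⟨ψ g, ?_⟩
    have heq : g * f - ψ g • f = f * (g - algebraMap ℂ A (ψ g)) := by
      rw [Algebra.smul_def, mul_sub]; ring
    rw [heq, pow_two]
    exact Ideal.mul_mem_mul hf (hmem g)
  by_cases hfN : f ∈ N
  · refine ⟨0, ?_⟩
    have hsub : ((Ideal.span {f} : Ideal A) : Set A) ⊆ (N : Set A) := by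
      intro y hy
      obtain ⟨c, hc⟩ := hspan y hy
      have : y = (y - c • f) + c • f := by ring
      rw [this]
      exact N.add_mem (hM2N _ hc) (N.smul_mem c hfN)
    have : x ∈ (N : Set A) := by
      rw [← SetLike.mem_coe, hMf] at hx
      exact closure_minimal hsub hNc hx
    simpa using this
  · haveI : IsClosed (N : Set A) := hNc
    -- quotient Banach space and a separating functional
    have hne : (Submodule.Quotient.mk f : A ⧸ N) ≠ 0 := by
      simpa [Submodule.Quotient.mk_eq_zero] using hfN
    obtain ⟨g, hg⟩ := SeparatingDual.exists_eq_one (R := ℂ) hne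
    let mkC : A →L[ℂ] A ⧸ N :=
      LinearMap.mkContinuous N.mkQ 1 fun y => by
        simpa using Submodule.Quotient.norm_mk_le N y
    let Λ : A →L[ℂ] ℂ := g.comp mkC
    have hΛf : Λ f = 1 := by
      show g (N.mkQ f) = 1
      simpa [Submodule.mkQ_apply] using hg
    have hΛN : ∀ y ∈ N, Λ y = 0 := by
      intro y hy
      show g (N.mkQ y) = 0
      rw [Submodule.mkQ_apply, (Submodule.Quotient.mk_eq_zero N).mpr hy, map_zero]
    refine ⟨Λ x, ?_⟩
    have hT : Continuous fun y : A => y - Λ y • f :=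
      continuous_id.sub (Λ.continuous.smul continuous_const)
    have hmaps : ∀ y ∈ ((Ideal.span {f} : Ideal A) : Set A),
        y - Λ y • f ∈ (N : Set A) := by
      intro y hy
      obtain ⟨c, hc⟩ := hspan y hy
      have hΛy : Λ y = c := by
        have : Λ y = Λ (y - c • f) + c * Λ f := by
          rw [map_sub, map_smul, smul_eq_mul]; ring
        rw [this, hΛN _ (hM2N _ hc), hΛf, zero_add, mul_one]
      rw [hΛy]
      exact hM2N _ hc
    have : x - Λ x • f ∈ closure (N : Set A) := by
      rw [← SetLike.mem_coe, hMf] at hx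
      exact map_mem_closure (f := fun y : A => y - Λ y • f) hT hx hmaps
    rwa [hNc.closure_eq] at this

end Aux

/-- Lemma 2.5: if `M` is a maximal ideal with `M = cl(fA)`, then `dim(M/cl M²) ≤ 1`,
`cl(M^m) = cl(f^m A)` for all `m ≥ 1`, and `cl(M^m) = cl(M^{m+1})` iff
`f^m ∈ cl(M^{m+1})`. -/
theorem principal_maximal_ideal_powers {A : Type*} [NormedCommRing A]
    [NormedAlgebra ℂ A] [CompleteSpace A]
    (M : Ideal A) (hM : M.IsMaximal) (f : A) (hf : f ∈ M)
    (hMf : (M : Set A) = closure ((Ideal.span {f} : Ideal A) : Set A)) :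
    Module.rank ℂ
      (↥(M.restrictScalars ℂ) ⧸
        Submodule.comap (M.restrictScalars ℂ).subtype (clPow M 2)) ≤ 1 ∧
    ∀ m : ℕ, 1 ≤ m →
      closure ((M ^ m : Ideal A) : Set A)
        = closure ((Ideal.span {f ^ m} : Ideal A) : Set A) ∧
      (closure ((M ^ m : Ideal A) : Set A) = closure ((M ^ (m + 1) : Ideal A) : Set A)
        ↔ f ^ m ∈ closure ((M ^ (m + 1) : Ideal A) : Set A)) := by
  have hMtc : M = (Ideal.span {f} : Ideal A).topologicalClosure := by
    apply SetLike.ext'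
    rw [hMf, Submodule.topologicalClosure_coe]
  have hpow : ∀ m : ℕ, closure ((M ^ m : Ideal A) : Set A)
      = closure ((Ideal.span {f ^ m} : Ideal A) : Set A) := by
    intro m
    apply Set.Subset.antisymm
    · have h1 : (M ^ m : Ideal A) ≤ (Ideal.span {f ^ m} : Ideal A).topologicalClosure := by
        calc (M ^ m : Ideal A) = (Ideal.span {f} : Ideal A).topologicalClosure ^ m := by
              rw [← hMtc]
          _ ≤ ((Ideal.span {f} : Ideal A) ^ m).topologicalClosure := cl_pow_le' _ m
          _ = (Ideal.span {f ^ m} : Ideal A).topologicalClosure := by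
              rw [Ideal.span_singleton_pow]
      refine closure_minimal (fun y hy => ?_) isClosed_closure
      exact mem_tc_iff'.mp (h1 hy)
    · exact closure_mono
        (Ideal.span_le.mpr (Set.singleton_subset_iff.mpr (Ideal.pow_mem_pow hf m)))
  constructor
  · -- rank bound
    set p : Submodule ℂ ↥(M.restrictScalars ℂ) :=
      Submodule.comap (M.restrictScalars ℂ).subtype (clPow M 2) with hp
    set fv : ↥(M.restrictScalars ℂ) := ⟨f, hf⟩ with hfv
    have hspan : Submodule.span ℂ
        {(Submodule.Quotient.mk fv : ↥(M.restrictScalars ℂ) ⧸ p)} = ⊤ := by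
      rw [eq_top_iff]
      rintro q -
      obtain ⟨⟨x, hx⟩, rfl⟩ := Submodule.Quotient.mk_surjective p q
      obtain ⟨c, hc⟩ := key_lemma M hM f hf hMf hx
      rw [Submodule.mem_span_singleton]
      refine ⟨c, ?_⟩
      rw [← Submodule.Quotient.mk_smul, Submodule.Quotient.eq]
      have : c • fv - ⟨x, hx⟩ ∈ p := by
        rw [hp, Submodule.mem_comap]
        have hxc : ((c • fv - ⟨x, hx⟩ : ↥(M.restrictScalars ℂ)) : A) = -(x - c • f) := by
          simp only [hfv, Submodule.coe_sub, Submodule.coe_smul,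
            neg_sub]
        rw [Submodule.subtype_apply, hxc]
        exact (clPow M 2).neg_mem hc
      exact this
    calc Module.rank ℂ (↥(M.restrictScalars ℂ) ⧸ p)
        = Module.rank ℂ
          ↥(Submodule.span ℂ
            {(Submodule.Quotient.mk fv : ↥(M.restrictScalars ℂ) ⧸ p)}) := by
          rw [hspan, rank_top]
      _ ≤ Cardinal.mk
            ({(Submodule.Quotient.mk fv : ↥(M.restrictScalars ℂ) ⧸ p)} : Set _) :=
          rank_span_le _
      _ = 1 := Cardinal.mk_singleton _
  · intro m _
    refine ⟨hpow m, ?_, ?_⟩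
    · intro h
      rw [← h]
      exact subset_closure (Ideal.pow_mem_pow hf m)
    · intro h
      apply Set.Subset.antisymm
      · rw [hpow m]
        have hle : Ideal.span {f ^ m} ≤ (M ^ (m + 1) : Ideal A).topologicalClosure :=
          Ideal.span_le.mpr (Set.singleton_subset_iff.mpr (mem_tc_iff'.mpr h))
        refine closure_minimal (fun y hy => ?_) isClosed_closure
        exact mem_tc_iff'.mp (hle hy)
      · exact closure_mono (Ideal.pow_le_pow_right (Nat.le_succ m))
end
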